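/- arXiv:0904.0109 — 7 statements merged into one kernel-verified Lean document; each statement's English description precedes it below -/
import Mathlib

section
/- In an authentication code with k source states, v messages, and encoding rules that are injective maps from source states to messages, the deception probability for a spoofing attack of order i satisfies P_{d_i} ≥ (k−i)/(v−i), for 0 ≤ i < k ≤ v. -/
theorem stmt7_aux {E M : Type*} [Fintype E] [Fintype M] [DecidableEq M]
    (im : E → Finset M) (k v i : ℕ) (hv : Fintype.card M = v)
    (hik : i < k) (hkv : k ≤ v)
    (hcard : ∀ e, (im e).card = k)
    (pE : E → ℝ) (hpE : ∀ e, 0 ≤ pE e)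
    (O : Finset M) (hOcard : O.card = i) :
    ∃ m' : M, m' ∉ O ∧
      ((k : ℝ) - i) / ((v : ℝ) - i) *
          (∑ e ∈ Finset.univ.filter (fun e => O ⊆ im e), pE e)
        ≤ ∑ e ∈ Finset.univ.filter (fun e => insert m' O ⊆ im e), pE e := by
  classical
  set A := Finset.univ.filter (fun e => O ⊆ im e) with hA
  set T := ∑ e ∈ A, pE e with hT
  set f : M → ℝ := fun m' => ∑ e ∈ Finset.univ.filter (fun e => insert m' O ⊆ im e), pE e
    with hf
  have key : ∑ m' ∈ Finset.univ \ O, f m' = ((k : ℝ) - i) * T := by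
    have hfilter : ∀ m' : M, Finset.univ.filter (fun e => insert m' O ⊆ im e)
        = A.filter (fun e => m' ∈ im e) := by
      intro m'
      ext e
      simp [hA, Finset.insert_subset_iff, and_comm]
    calc ∑ m' ∈ Finset.univ \ O, f m'
        = ∑ m' ∈ Finset.univ \ O, ∑ e ∈ A, if m' ∈ im e then pE e else 0 := by
          simp only [hf, hfilter, Finset.sum_filter]
      _ = ∑ e ∈ A, ∑ m' ∈ Finset.univ \ O, if m' ∈ im e then pE e else 0 :=
          Finset.sum_comm
      _ = ∑ e ∈ A, ((k : ℝ) - i) * pE e := by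
          refine Finset.sum_congr rfl fun e he => ?_
          have hOe : O ⊆ im e := by simpa [hA] using he
          have h1 : ∑ m' ∈ Finset.univ \ O, (if m' ∈ im e then pE e else 0)
              = ∑ m' ∈ (Finset.univ \ O) ∩ im e, pE e := Finset.sum_ite_mem _ _ _
          have h2 : (Finset.univ \ O) ∩ im e = im e \ O := by
            ext x; simp [Finset.mem_sdiff, and_comm]
          have h3 : (im e \ O).card = k - i := by
            rw [Finset.card_sdiff_of_subset hOe, hcard, hOcard]
          rw [h1, h2, Finset.sum_const, h3, nsmul_eq_mul,
            Nat.cast_sub hik.le]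
      _ = ((k : ℝ) - i) * T := by rw [hT, Finset.mul_sum]
  by_contra hcon
  push_neg at hcon
  have hne : (Finset.univ \ O).Nonempty := by
    rw [← Finset.card_pos, Finset.card_sdiff_of_subset (Finset.subset_univ O), hOcard,
      Finset.card_univ, hv]
    omega
  have hlt : ∑ m' ∈ Finset.univ \ O, f m'
      < ∑ _m' ∈ Finset.univ \ O, (((k : ℝ) - i) / ((v : ℝ) - i) * T) := by
    refine Finset.sum_lt_sum_of_nonempty hne fun m' hm' => ?_
    exact hcon m' (Finset.mem_sdiff.mp hm').2
  rw [key, Finset.sum_const, Finset.card_sdiff_of_subset (Finset.subset_univ O), hOcard,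
    Finset.card_univ, hv, nsmul_eq_mul, Nat.cast_sub (le_trans hik.le hkv)] at hlt
  have hvi : (v : ℝ) - i ≠ 0 := by
    have : (i : ℝ) < v := by exact_mod_cast lt_of_lt_of_le hik hkv
    linarith
  have : ((v : ℝ) - i) * (((k : ℝ) - i) / ((v : ℝ) - i) * T) = ((k : ℝ) - i) * T := by
    field_simp
  linarith

/-- Massey's bound: in an authentication code with k source states and v messages,
the deception probability for spoofing of order i is at least (k−i)/(v−i): there is
a set O of i observable messages and a fresh message m' whose (unnormalized)
conditional probability of being valid is at least (k−i)/(v−i). -/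
theorem stmt7 {S M E : Type*} [Fintype S] [Fintype M] [Fintype E] [DecidableEq M]
    (k v i : ℕ) (hk : Fintype.card S = k) (hv : Fintype.card M = v)
    (hik : i < k) (hkv : k ≤ v)
    (enc : E → (S ↪ M)) (pE : E → ℝ)
    (hpE : ∀ e, 0 ≤ pE e) (hsum : ∑ e, pE e = 1) :
    ∃ O : Finset M, O.card = i ∧
      (∃ e : E, 0 < pE e ∧ O ⊆ Finset.image (enc e) Finset.univ) ∧
      ∃ m' : M, m' ∉ O ∧
        ((k : ℝ) - i) / ((v : ℝ) - i) *
            (∑ e ∈ Finset.univ.filter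
              (fun e => O ⊆ Finset.image (enc e) Finset.univ), pE e)
          ≤ ∑ e ∈ Finset.univ.filter
              (fun e => insert m' O ⊆ Finset.image (enc e) Finset.univ), pE e := by
  classical
  obtain ⟨e0, he0⟩ : ∃ e : E, 0 < pE e := by
    by_contra h
    push_neg at h
    have : ∑ e, pE e ≤ 0 := Finset.sum_nonpos fun e _ => h e
    linarith
  have hcard : ∀ e : E, (Finset.image (enc e) Finset.univ).card = k := by
    intro e
    rw [Finset.card_image_of_injective _ (enc e).injective, Finset.card_univ, hk]
  obtain ⟨O, hOsub, hOcard⟩ :=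
    Finset.exists_subset_card_eq (s := Finset.image (enc e0) Finset.univ) (n := i)
      (by rw [hcard]; exact hik.le)
  exact ⟨O, hOcard, ⟨e0, he0, hOsub⟩,
    stmt7_aux (fun e => Finset.image (enc e) Finset.univ) k v i hv hik hkv hcard
      pE hpE O hOcard⟩
end

section
/- If an authentication code with k source states and v messages is (t−1)-fold secure against spoofing, then the number of encoding rules b satisfies b ≥ C(v,t)/C(k,t). -/
/-- Massey–Schöbi bound: if an authentication code with k source states and v
messages is (t−1)-fold secure against spoofing (P_{d_i} = (k−i)/(v−i) for
0 ≤ i ≤ t−1), then the number b of encoding rules satisfies b ≥ C(v,t)/C(k,t). -/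
theorem stmt8 {S M E : Type*} [Fintype S] [Fintype M] [Fintype E] [DecidableEq M]
    (k v t : ℕ) (hk : Fintype.card S = k) (hv : Fintype.card M = v)
    (ht : 1 ≤ t) (htk : t ≤ k) (hkv : k ≤ v)
    (enc : E → (S ↪ M)) (pE : E → ℝ)
    (hpE : ∀ e, 0 ≤ pE e) (hsum : ∑ e, pE e = 1)
    (hsec : ∀ i < t, ∀ O : Finset M, O.card = i → ∀ m' ∉ O,
      (∑ e ∈ Finset.univ.filter
          (fun e => insert m' O ⊆ Finset.image (enc e) Finset.univ), pE e)
        ≤ ((k : ℝ) - i) / ((v : ℝ) - i) *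
            (∑ e ∈ Finset.univ.filter
              (fun e => O ⊆ Finset.image (enc e) Finset.univ), pE e)) :
    ((v.choose t : ℝ) / (k.choose t : ℝ)) ≤ (Fintype.card E : ℝ) := by
  classical
  set img : E → Finset M := fun e => Finset.image (enc e) Finset.univ with himg
  have himgcard : ∀ e, (img e).card = k := by
    intro e
    rw [himg, Finset.card_image_of_injective _ (enc e).injective, Finset.card_univ, hk]
  set f : Finset M → ℝ :=
    fun T => ∑ e ∈ Finset.univ.filter (fun e => T ⊆ img e), pE e with hf
  have hfnn : ∀ T, 0 ≤ f T := fun T => Finset.sum_nonneg fun e _ => hpE e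
  -- the descending product equals C(k,t)/C(v,t)
  have hdesc : ∀ n : ℕ, ∏ j ∈ Finset.range t, ((n : ℝ) - j) = (n.descFactorial t : ℝ) := by
    intro n
    rw [Finset.prod_range_natCast_sub, Nat.descFactorial_eq_prod_range]
  have hprod : ∏ j ∈ Finset.range t, ((k : ℝ) - j) / ((v : ℝ) - j)
      = (k.choose t : ℝ) / (v.choose t : ℝ) := by
    rw [Finset.prod_div_distrib, hdesc, hdesc,
      Nat.descFactorial_eq_factorial_mul_choose, Nat.descFactorial_eq_factorial_mul_choose]
    push_cast
    rw [mul_div_mul_left]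
    exact_mod_cast (Nat.factorial_pos t).ne'
  -- bound on f for sets of card ≤ t
  have hbound : ∀ i ≤ t, ∀ T : Finset M, T.card = i →
      f T ≤ ∏ j ∈ Finset.range i, ((k : ℝ) - j) / ((v : ℝ) - j) := by
    intro i
    induction i with
    | zero =>
      intro _ T hT
      rw [Finset.card_eq_zero] at hT
      subst hT
      simp only [Finset.range_zero, Finset.prod_empty, hf]
      simp [hsum]
    | succ i ih =>
      intro hit T hT
      have hTne : T.Nonempty := by rw [← Finset.card_pos, hT]; omega
      obtain ⟨m', hm'⟩ := hTne
      have hOcard : (T.erase m').card = i := by rw [Finset.card_erase_of_mem hm', hT]; omega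
      have h1 := hsec i (by omega) (T.erase m') hOcard m' (Finset.notMem_erase _ _)
      rw [Finset.insert_erase hm'] at h1
      have h2 := ih (by omega) (T.erase m') hOcard
      have hk' : (0:ℝ) ≤ (k : ℝ) - i := by
        have : i < k := by omega
        have := Nat.cast_lt (α := ℝ) |>.2 this
        linarith
      have hv' : (0:ℝ) ≤ (v : ℝ) - i := by
        have : i < v := by omega
        have := Nat.cast_lt (α := ℝ) |>.2 this
        linarith
      have hpos : 0 ≤ ((k : ℝ) - i) / ((v : ℝ) - i) := div_nonneg hk' hv'
      calc f T ≤ ((k : ℝ) - i) / ((v : ℝ) - i) * f (T.erase m') := h1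
        _ ≤ ((k : ℝ) - i) / ((v : ℝ) - i) * ∏ j ∈ Finset.range i, ((k : ℝ) - j) / ((v : ℝ) - j) :=
            mul_le_mul_of_nonneg_left h2 hpos
        _ = ∏ j ∈ Finset.range (i + 1), ((k : ℝ) - j) / ((v : ℝ) - j) := by
            rw [Finset.prod_range_succ, mul_comm]
  -- the total sum over t-subsets equals C(k,t)
  set P : Finset (Finset M) := Finset.powersetCard t (Finset.univ : Finset M) with hP
  have hPcard : P.card = v.choose t := by
    rw [hP, Finset.card_powersetCard, Finset.card_univ, hv]
  have htotal : ∑ T ∈ P, f T = (k.choose t : ℝ) := by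
    have : ∑ T ∈ P, f T = ∑ e, (((img e).powersetCard t).card : ℝ) * pE e := by
      simp only [hf, Finset.sum_filter]
      rw [Finset.sum_comm]
      refine Finset.sum_congr rfl fun e _ => ?_
      rw [← Finset.sum_filter]
      have : P.filter (fun T => T ⊆ img e) = (img e).powersetCard t := by
        ext T
        simp only [Finset.mem_filter, hP, Finset.mem_powersetCard, Finset.subset_univ,
          true_and]
        tauto
      rw [this, Finset.sum_const, nsmul_eq_mul]
    rw [this]
    have : ∀ e : E, (((img e).powersetCard t).card : ℝ) = (k.choose t : ℝ) := by
      intro e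
      rw [Finset.card_powersetCard, himgcard]
    simp_rw [this]
    rw [← Finset.mul_sum, hsum, mul_one]
  -- positivity facts
  have hckpos : 0 < (k.choose t : ℝ) := by exact_mod_cast Nat.choose_pos htk
  have hcvpos : 0 < (v.choose t : ℝ) := by exact_mod_cast Nat.choose_pos (le_trans htk hkv)
  have hcpos : 0 < (k.choose t : ℝ) / (v.choose t : ℝ) := div_pos hckpos hcvpos
  -- every t-subset of M is covered by some encoding rule
  have hcov : ∀ T ∈ P, ∃ e : E, T ⊆ img e := by
    by_contra h
    push_neg at h
    obtain ⟨T0, hT0, hT0'⟩ := h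
    have hfT0 : f T0 = 0 := by
      rw [hf]
      apply Finset.sum_eq_zero
      intro e he
      exact absurd (Finset.mem_filter.1 he).2 (hT0' e)
    have hle : ∑ T ∈ P, f T ≤ ((P.card : ℝ) - 1) * ((k.choose t : ℝ) / (v.choose t : ℝ)) := by
      rw [← Finset.add_sum_erase P f hT0, hfT0, zero_add]
      calc ∑ T ∈ P.erase T0, f T
          ≤ (P.erase T0).card • ((k.choose t : ℝ) / (v.choose t : ℝ)) := by
            apply Finset.sum_le_card_nsmul
            intro T hT
            have hTP := Finset.mem_of_mem_erase hT
            have : T.card = t := (Finset.mem_powersetCard.1 hTP).2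
            have := hbound t le_rfl T this
            rwa [hprod] at this
        _ = ((P.card : ℝ) - 1) * ((k.choose t : ℝ) / (v.choose t : ℝ)) := by
            rw [Finset.card_erase_of_mem hT0, nsmul_eq_mul]
            congr 1
            have : 1 ≤ P.card := Finset.card_pos.2 ⟨T0, hT0⟩
            push_cast [Nat.cast_sub this]
            ring
    rw [htotal, hPcard] at hle
    have : ((v.choose t : ℝ) - 1) * ((k.choose t : ℝ) / (v.choose t : ℝ))
        < (v.choose t : ℝ) * ((k.choose t : ℝ) / (v.choose t : ℝ)) := by
      apply mul_lt_mul_of_pos_right _ hcpos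
      linarith
    rw [mul_div_cancel₀ _ hcvpos.ne'] at this
    linarith
  -- counting argument
  have hnat : v.choose t ≤ Fintype.card E * k.choose t := by
    have hsub : P ⊆ Finset.univ.biUnion (fun e : E => (img e).powersetCard t) := by
      intro T hT
      obtain ⟨e, he⟩ := hcov T hT
      exact Finset.mem_biUnion.2 ⟨e, Finset.mem_univ e,
        Finset.mem_powersetCard.2 ⟨he, (Finset.mem_powersetCard.1 hT).2⟩⟩
    calc v.choose t = P.card := hPcard.symm
      _ ≤ (Finset.univ.biUnion (fun e : E => (img e).powersetCard t)).card :=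
          Finset.card_le_card hsub
      _ ≤ ∑ e : E, ((img e).powersetCard t).card := Finset.card_biUnion_le
      _ = Fintype.card E * k.choose t := by
          simp [Finset.card_powersetCard, himgcard, Finset.sum_const, Finset.card_univ,
            mul_comm]
  rw [div_le_iff₀ hckpos]
  exact_mod_cast hnat
end

section
/- Suppose there is a t-(v,k,λ) design. Then there is an authentication code for k equiprobable source states, with v messages and λ·C(v,t)/C(k,t) encoding rules, that is (t−1)-fold secure against spoofing (i.e., P_{d_i} = (k−i)/(v−i) for 0 ≤ i ≤ t−1). -/
/-- From a t-(v,k,λ) design one obtains an authentication code for k equiprobable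
source states with v messages and λ·C(v,t)/C(k,t) equiprobable encoding rules that
is (t−1)-fold secure against spoofing: for 0 ≤ i ≤ t−1 every observed i-set O and
fresh message m' satisfy P_{d_i} = (k−i)/(v−i). -/
theorem stmt9 {S M : Type*} [Fintype S] [Fintype M] [DecidableEq M] [DecidableEq S]
    (k v t lam : ℕ) (hk : Fintype.card S = k) (hv : Fintype.card M = v)
    (ht : 1 ≤ t) (htk : t ≤ k) (hkv : k ≤ v) (hlam : 0 < lam)
    (B : Finset (Finset M)) (hblocks : ∀ b ∈ B, b.card = k)
    (hdesign : ∀ T : Finset M, T.card = t → (B.filter (fun b => T ⊆ b)).card = lam) :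
    ∃ E : Finset (S ↪ M),
      E.card = lam * v.choose t / k.choose t ∧
      ∀ i < t, ∀ O : Finset M, O.card = i → ∀ m' ∉ O,
        (E.filter (fun e : S ↪ M => insert m' O ⊆ Finset.image e Finset.univ)).card * (v - i)
          = (k - i) * (E.filter (fun e : S ↪ M => O ⊆ Finset.image e Finset.univ)).card := by
  classical
  set N : Finset M → ℕ := fun T => (B.filter (fun b => T ⊆ b)).card with hN
  -- double counting: summing over fresh messages
  have hsum : ∀ O : Finset M,
      ∑ m ∈ Finset.univ \ O, N (insert m O) = (k - O.card) * N O := by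
    intro O
    have h1 : ∀ m : M, N (insert m O) = ∑ b ∈ B, if insert m O ⊆ b then 1 else 0 := by
      intro m; rw [hN]; exact Finset.card_filter _ _
    calc ∑ m ∈ Finset.univ \ O, N (insert m O)
        = ∑ m ∈ Finset.univ \ O, ∑ b ∈ B, if insert m O ⊆ b then 1 else 0 := by
          exact Finset.sum_congr rfl fun m _ => h1 m
      _ = ∑ b ∈ B, ∑ m ∈ Finset.univ \ O, if insert m O ⊆ b then 1 else 0 :=
          Finset.sum_comm
      _ = ∑ b ∈ B, if O ⊆ b then k - O.card else 0 := by
          refine Finset.sum_congr rfl fun b hb => ?_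
          by_cases hOb : O ⊆ b
          · simp only [hOb, if_true]
            have : ∀ m ∈ Finset.univ \ O, (insert m O ⊆ b) ↔ m ∈ b := by
              intro m _; simp [Finset.insert_subset_iff, hOb]
            rw [Finset.sum_congr rfl fun m hm => by rw [if_congr (this m hm) rfl rfl]]
            have h2 : (Finset.univ \ O).filter (fun m => m ∈ b) = b \ O := by
              ext m; simp [and_comm]
            rw [← Finset.card_filter, h2, Finset.card_sdiff_of_subset hOb, hblocks b hb]
          · simp only [hOb, if_false]
            refine Finset.sum_eq_zero fun m _ => ?_
            have : ¬ insert m O ⊆ b := fun h => hOb ((Finset.subset_insert m O).trans h)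
            simp [this]
      _ = (k - O.card) * N O := by
          rw [← Finset.sum_filter, Finset.sum_const, smul_eq_mul, hN, mul_comm]
  -- the generalized replication numbers
  have L : ∀ d, d ≤ t → ∀ O : Finset M, O.card = t - d →
      N O * (k - (t - d)).choose d = lam * (v - (t - d)).choose d := by
    intro d
    induction d with
    | zero =>
      intro _ O hO
      simp only [Nat.sub_zero] at hO
      simp [Nat.choose_zero_right, hdesign O hO, hN]
    | succ d ih =>
      intro hd1 O hO
      set i := t - (d + 1) with hi
      have hid : i + 1 = t - d := by omega
      have hik : i < k := by omega
      have hiv : i < v := by omega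
      have key : ((k - i) * N O) * (k - i - 1).choose d
          = (v - i) * (lam * (v - i - 1).choose d) := by
        have h1 : ∑ m ∈ Finset.univ \ O, N (insert m O) * (k - i - 1).choose d
            = ((k - i) * N O) * (k - i - 1).choose d := by
          rw [← Finset.sum_mul, hsum O, hO]
        have h2 : ∑ m ∈ Finset.univ \ O, N (insert m O) * (k - i - 1).choose d
            = (v - i) * (lam * (v - i - 1).choose d) := by
          have : ∀ m ∈ Finset.univ \ O, N (insert m O) * (k - i - 1).choose d
              = lam * (v - i - 1).choose d := by
            intro m hm
            have hm' : m ∉ O := (Finset.mem_sdiff.mp hm).2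
            have hcard : (insert m O).card = t - d := by
              rw [Finset.card_insert_of_notMem hm', hO]; omega
            have := ih (by omega) (insert m O) hcard
            have hk' : k - (t - d) = k - i - 1 := by omega
            have hv' : v - (t - d) = v - i - 1 := by omega
            rwa [hk', hv'] at this
          rw [Finset.sum_congr rfl this, Finset.sum_const,
            Finset.card_sdiff_of_subset (Finset.subset_univ O), Finset.card_univ, hv, hO,
            smul_eq_mul]
        rw [← h1, h2]
      have e1 : (k - i) * (k - i - 1).choose d = (k - i).choose (d + 1) * (d + 1) := by
        have h : k - i = (k - i - 1) + 1 := by omega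
        rw [h]; exact Nat.add_one_mul_choose_eq _ _
      have e2 : (v - i) * (v - i - 1).choose d = (v - i).choose (d + 1) * (d + 1) := by
        have h : v - i = (v - i - 1) + 1 := by omega
        rw [h]; exact Nat.add_one_mul_choose_eq _ _
      have goal' : (N O * (k - i).choose (d + 1)) * (d + 1)
          = (lam * (v - i).choose (d + 1)) * (d + 1) := by
        calc (N O * (k - i).choose (d + 1)) * (d + 1)
            = N O * ((k - i).choose (d + 1) * (d + 1)) := by ring
          _ = N O * ((k - i) * (k - i - 1).choose d) := by rw [e1]
          _ = ((k - i) * N O) * (k - i - 1).choose d := by ring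
          _ = (v - i) * (lam * (v - i - 1).choose d) := key
          _ = lam * ((v - i) * (v - i - 1).choose d) := by ring
          _ = lam * ((v - i).choose (d + 1) * (d + 1)) := by rw [e2]
          _ = (lam * (v - i).choose (d + 1)) * (d + 1) := by ring
      exact Nat.eq_of_mul_eq_mul_right (Nat.succ_pos d) goal'
  -- construct the encoding rules
  have hcardSb : ∀ b : {x // x ∈ B}, Fintype.card S = Fintype.card b.1 := by
    intro b; rw [hk, Fintype.card_coe, hblocks b.1 b.2]
  let f : {x // x ∈ B} → (S ↪ M) := fun b =>
    ((Fintype.equivOfCardEq (hcardSb b)).toEmbedding).trans (Function.Embedding.subtype _)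
  have himg : ∀ b : {x // x ∈ B}, Finset.image (f b) Finset.univ = b.1 := by
    intro b
    ext m
    simp only [Finset.mem_image, Finset.mem_univ, true_and]
    constructor
    · rintro ⟨s, rfl⟩
      exact ((Fintype.equivOfCardEq (hcardSb b)) s).2
    · intro hm
      exact ⟨(Fintype.equivOfCardEq (hcardSb b)).symm ⟨m, hm⟩, by
        simp [f, Function.Embedding.trans]⟩
  have hfinj : Function.Injective f := by
    intro b1 b2 h
    have : b1.1 = b2.1 := by rw [← himg b1, ← himg b2, h]
    exact Subtype.ext this
  refine ⟨B.attach.image f, ?_, ?_⟩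
  · rw [Finset.card_image_of_injective _ hfinj, Finset.card_attach]
    have h0 : N ∅ * k.choose t = lam * v.choose t := by
      have := L t le_rfl ∅ (by simp)
      simpa using this
    have hNempty : N ∅ = B.card := by simp [hN]
    rw [hNempty] at h0
    exact (Nat.div_eq_of_eq_mul_left (Nat.choose_pos htk) h0.symm).symm
  · have hfilter : ∀ T : Finset M,
        ((B.attach.image f).filter
          (fun e : S ↪ M => T ⊆ Finset.image e Finset.univ)).card = N T := by
      intro T
      rw [Finset.filter_image, Finset.card_image_of_injective _ hfinj]
      have hcongr : B.attach.filter (fun b => T ⊆ Finset.image (f b) Finset.univ)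
          = B.attach.filter (fun b => T ⊆ b.1) :=
        Finset.filter_congr (fun b _ => by rw [himg b])
      rw [hcongr, Finset.card_filter,
        Finset.sum_attach B (fun b => if T ⊆ b then 1 else 0)]
      simp only [hN]
      exact (Finset.card_filter _ _).symm
    intro i hit O hO m' hm'
    rw [hfilter, hfilter]
    have hA := L (t - i) (Nat.sub_le t i) O (by omega)
    have hB' := L (t - i - 1) (by omega) (insert m' O)
      (by rw [Finset.card_insert_of_notMem hm', hO]; omega)
    have hki : k - (t - (t - i)) = k - i := by omega
    have hvi : v - (t - (t - i)) = v - i := by omega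
    rw [hki, hvi] at hA
    have hki' : k - (t - (t - i - 1)) = k - i - 1 := by omega
    have hvi' : v - (t - (t - i - 1)) = v - i - 1 := by omega
    rw [hki', hvi'] at hB'
    have hti : t - i = (t - i - 1) + 1 := by omega
    have e1 : (k - i) * (k - i - 1).choose (t - i - 1)
        = (k - i).choose (t - i) * (t - i) := by
      have h : k - i = (k - i - 1) + 1 := by omega
      rw [h, hti]; exact Nat.add_one_mul_choose_eq _ _
    have e2 : (v - i) * (v - i - 1).choose (t - i - 1)
        = (v - i).choose (t - i) * (t - i) := by
      have h : v - i = (v - i - 1) + 1 := by omega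
      rw [h, hti]; exact Nat.add_one_mul_choose_eq _ _
    have cpos : 0 < (k - i).choose (t - i) * (k - i - 1).choose (t - i - 1) :=
      Nat.mul_pos (Nat.choose_pos (by omega)) (Nat.choose_pos (by omega))
    refine Nat.eq_of_mul_eq_mul_right cpos ?_
    calc (N (insert m' O) * (v - i)) * ((k - i).choose (t - i) * (k - i - 1).choose (t - i - 1))
        = (N (insert m' O) * (k - i - 1).choose (t - i - 1)) * ((v - i) * (k - i).choose (t - i)) := by ring
      _ = (lam * (v - i - 1).choose (t - i - 1)) * ((v - i) * (k - i).choose (t - i)) := by rw [hB']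
      _ = lam * (((v - i) * (v - i - 1).choose (t - i - 1)) * (k - i).choose (t - i)) := by ring
      _ = lam * (((v - i).choose (t - i) * (t - i)) * (k - i).choose (t - i)) := by rw [e2]
      _ = (lam * (v - i).choose (t - i)) * ((t - i) * (k - i).choose (t - i)) := by ring
      _ = (N O * (k - i).choose (t - i)) * ((t - i) * (k - i).choose (t - i)) := by rw [hA]
      _ = (N O * (k - i).choose (t - i)) * ((k - i) * (k - i - 1).choose (t - i - 1)) := by rw [e1]; ring_nf
      _ = ((k - i) * N O) * ((k - i).choose (t - i) * (k - i - 1).choose (t - i - 1)) := by ring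
end

section
/- If there is an authentication code for k equiprobable source states, with v messages and exactly C(v,t)/C(k,t) encoding rules, that is (t−1)-fold secure against spoofing, then the sets of valid messages M(e), for e ranging over encoding rules, form the blocks of a Steiner t-(v,k,1) design on the message set. -/
/-- Converse: an authentication code for k equiprobable source states with v
messages and exactly C(v,t)/C(k,t) encoding rules that is (t−1)-fold secure
against spoofing gives rise to a Steiner t-(v,k,1) design: every t-set of
messages lies in the valid-message set M(e) of exactly one encoding rule. -/
theorem stmt10 {S M E : Type*} [Fintype S] [Fintype M] [Fintype E] [DecidableEq M]
    (k v t : ℕ) (hk : Fintype.card S = k) (hv : Fintype.card M = v)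
    (ht : 1 ≤ t) (htk : t ≤ k) (hkv : k ≤ v)
    (enc : E → (S ↪ M)) (pE : E → ℝ)
    (hpE : ∀ e, 0 ≤ pE e) (hsum : ∑ e, pE e = 1)
    (hcard : Fintype.card E * k.choose t = v.choose t)
    (hsec : ∀ i < t, ∀ O : Finset M, O.card = i → ∀ m' ∉ O,
      (∑ e ∈ Finset.univ.filter
          (fun e => insert m' O ⊆ Finset.image (enc e) Finset.univ), pE e)
        = ((k : ℝ) - i) / ((v : ℝ) - i) *
            (∑ e ∈ Finset.univ.filter
              (fun e => O ⊆ Finset.image (enc e) Finset.univ), pE e)) :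
    ∀ T : Finset M, T.card = t → ∃! e : E, T ⊆ Finset.image (enc e) Finset.univ := by
  classical
  set B : E → Finset M := fun e => Finset.image (enc e) Finset.univ with hB
  set f : Finset M → ℝ :=
    fun O => ∑ e ∈ Finset.univ.filter (fun e => O ⊆ B e), pE e with hf
  have hBcard : ∀ e, (B e).card = k := by
    intro e
    rw [hB]
    rw [Finset.card_image_of_injective _ (enc e).injective, Finset.card_univ, hk]
  -- Step 1: value of f on sets of size i ≤ t
  have lem : ∀ i, i ≤ t → ∀ O : Finset M, O.card = i →
      f O = ∏ j ∈ Finset.range i, (((k : ℝ) - j) / ((v : ℝ) - j)) := by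
    intro i
    induction i with
    | zero =>
      intro _ O hO
      rw [Finset.card_eq_zero] at hO
      subst hO
      simpa [hf] using hsum
    | succ n ih =>
      intro hn O hO
      obtain ⟨m', hm'⟩ : O.Nonempty := by
        rw [← Finset.card_pos, hO]; omega
      have hO' : (O.erase m').card = n := by
        rw [Finset.card_erase_of_mem hm', hO]
        omega
      have hins : insert m' (O.erase m') = O := Finset.insert_erase hm'
      have hstep := hsec n (by omega) (O.erase m') hO' m' (Finset.notMem_erase _ _)
      rw [hins] at hstep
      have hstep' : f O = ((k : ℝ) - n) / ((v : ℝ) - n) * f (O.erase m') := hstep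
      rw [Finset.prod_range_succ, ← ih (by omega) _ hO', hstep']
      ring
  -- Step 2: every t-set is in at least one block
  have hnonempty : ∀ T : Finset M, T.card = t →
      (Finset.univ.filter (fun e => T ⊆ B e)).Nonempty := by
    intro T hT
    by_contra h
    rw [Finset.not_nonempty_iff_eq_empty] at h
    have h0 : f T = 0 := by simp [hf, h]
    have hval := lem t le_rfl T hT
    rw [h0] at hval
    have hprod : 0 < ∏ j ∈ Finset.range t, (((k : ℝ) - j) / ((v : ℝ) - j)) := by
      apply Finset.prod_pos
      intro j hj
      rw [Finset.mem_range] at hj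
      have h1 : (j : ℝ) < k := by exact_mod_cast lt_of_lt_of_le hj htk
      have h2 : (j : ℝ) < v := by exact_mod_cast lt_of_lt_of_le hj (le_trans htk hkv)
      exact div_pos (by linarith) (by linarith)
    linarith
  -- Step 3: double counting
  have hswap : ∑ T ∈ Finset.univ.powersetCard t,
      (Finset.univ.filter (fun e => T ⊆ B e)).card
      = Fintype.card E * k.choose t := by
    calc ∑ T ∈ Finset.univ.powersetCard t,
          (Finset.univ.filter (fun e => T ⊆ B e)).card
        = ∑ T ∈ Finset.univ.powersetCard t, ∑ e : E, (if T ⊆ B e then 1 else 0) := by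
          refine Finset.sum_congr rfl fun T _ => ?_
          exact Finset.card_filter _ _
      _ = ∑ e : E, ∑ T ∈ Finset.univ.powersetCard t, (if T ⊆ B e then 1 else 0) :=
          Finset.sum_comm
      _ = ∑ e : E, ((Finset.univ.powersetCard t).filter (fun T => T ⊆ B e)).card := by
          refine Finset.sum_congr rfl fun e _ => ?_
          exact (Finset.card_filter _ _).symm
      _ = ∑ e : E, ((B e).powersetCard t).card := by
          refine Finset.sum_congr rfl fun e _ => ?_
          congr 1
          ext T
          simp only [Finset.mem_filter, Finset.mem_powersetCard, Finset.subset_univ,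
            true_and]
          tauto
      _ = ∑ e : E, k.choose t := by
          refine Finset.sum_congr rfl fun e _ => ?_
          rw [Finset.card_powersetCard, hBcard]
      _ = Fintype.card E * k.choose t := by
          rw [Finset.sum_const, Finset.card_univ, smul_eq_mul]
  have htotal : ∑ T ∈ (Finset.univ : Finset M).powersetCard t,
      (Finset.univ.filter (fun e => T ⊆ B e)).card
      = ∑ _T ∈ (Finset.univ : Finset M).powersetCard t, 1 := by
    rw [hswap, hcard, Finset.sum_const, smul_eq_mul, mul_one,
      Finset.card_powersetCard, Finset.card_univ, hv]
  have key : ∀ T ∈ Finset.univ.powersetCard t,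
      (Finset.univ.filter (fun e => T ⊆ B e)).card = 1 := by
    have hle : ∀ T ∈ Finset.univ.powersetCard t,
        1 ≤ (Finset.univ.filter (fun e => T ⊆ B e)).card := by
      intro T hT
      rw [Finset.mem_powersetCard] at hT
      exact Finset.card_pos.mpr (hnonempty T hT.2)
    intro T hT
    exact ((Finset.sum_eq_sum_iff_of_le hle).mp htotal.symm T hT).symm
  intro T hT
  have hT' : T ∈ Finset.univ.powersetCard t := by
    rw [Finset.mem_powersetCard]; exact ⟨Finset.subset_univ T, hT⟩
  have h1 := key T hT'
  rw [Finset.card_eq_one] at h1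
  obtain ⟨e, he⟩ := h1
  refine ⟨e, ?_, ?_⟩
  · have : e ∈ Finset.univ.filter (fun e => T ⊆ B e) := he ▸ Finset.mem_singleton_self e
    exact (Finset.mem_filter.mp this).2
  · intro e' he'
    have : e' ∈ Finset.univ.filter (fun e => T ⊆ B e) :=
      Finset.mem_filter.mpr ⟨Finset.mem_univ _, he'⟩
    rw [he, Finset.mem_singleton] at this
    exact this
end

section
/- An authentication code with equiprobable encoding rules and equiprobable source states has perfect secrecy if and only if each message occurs with the same frequency in each column of the encoding matrix; i.e., for every message m and every pair of source states s, s', the number of encoding rules e with e(s) = m equals the number with e(s') = m. -/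
/-- For equiprobable encoding rules and equiprobable source states, perfect secrecy
(p_S(s|m) = p_S(s) for every s and every message m with p_M(m) > 0, where
p_S(s|m) = (Σ_{e:e(s)=m} p_E(e)p_S(s)) / (Σ_{e:m∈M(e)} p_E(e)p_S(e⁻¹(m)))) holds if
and only if each message occurs with the same frequency in each column of the
encoding matrix. -/
theorem stmt11 {S M E : Type*} [Fintype S] [Fintype M] [Fintype E]
    [DecidableEq M] [DecidableEq S] [Nonempty S] [Nonempty E]
    (enc : E → (S ↪ M)) :
    (∀ (s : S) (m : M),
      0 < (∑ e ∈ Finset.univ.filter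
            (fun e => m ∈ Finset.image (enc e) Finset.univ),
          (1 / (Fintype.card E : ℝ)) * (1 / (Fintype.card S : ℝ))) →
      (∑ e ∈ Finset.univ.filter (fun e => enc e s = m),
          (1 / (Fintype.card E : ℝ)) * (1 / (Fintype.card S : ℝ))) /
        (∑ e ∈ Finset.univ.filter
            (fun e => m ∈ Finset.image (enc e) Finset.univ),
          (1 / (Fintype.card E : ℝ)) * (1 / (Fintype.card S : ℝ)))
        = 1 / (Fintype.card S : ℝ))
    ↔ (∀ (m : M) (s s' : S),
        (Finset.univ.filter (fun e : E => enc e s = m)).card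
          = (Finset.univ.filter (fun e : E => enc e s' = m)).card) := by
  classical
  set c : ℝ := (1 / (Fintype.card E : ℝ)) * (1 / (Fintype.card S : ℝ)) with hc
  have hEpos : (0 : ℝ) < Fintype.card E := by
    exact_mod_cast Fintype.card_pos
  have hSpos : (0 : ℝ) < Fintype.card S := by
    exact_mod_cast Fintype.card_pos
  have hcpos : 0 < c := by positivity
  set N : S → M → ℕ := fun s m => (Finset.univ.filter (fun e : E => enc e s = m)).card
    with hN
  set D : M → ℕ := fun m =>
    (Finset.univ.filter (fun e : E => m ∈ Finset.image (enc e) Finset.univ)).card with hDdef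
  have hsum1 : ∀ (s : S) (m : M),
      (∑ e ∈ Finset.univ.filter (fun e : E => enc e s = m), c) = (N s m : ℝ) * c := by
    intro s m
    rw [Finset.sum_const, nsmul_eq_mul]
  have hsum2 : ∀ (m : M),
      (∑ e ∈ Finset.univ.filter
          (fun e : E => m ∈ Finset.image (enc e) Finset.univ), c) = (D m : ℝ) * c := by
    intro m
    rw [Finset.sum_const, nsmul_eq_mul]
  have hD : ∀ m, D m = ∑ s, N s m := by
    intro m
    simp only [hDdef, hN, Finset.card_filter]
    rw [Finset.sum_comm]
    refine Finset.sum_congr rfl fun e _ => ?_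
    by_cases h : m ∈ Finset.image (enc e) Finset.univ
    · obtain ⟨s, _, hs⟩ := Finset.mem_image.mp h
      have heq : ∀ s', enc e s' = m ↔ s' = s := fun s' =>
        ⟨fun h' => (enc e).injective (h'.trans hs.symm), fun h' => h' ▸ hs⟩
      simp [h, heq]
    · have : ∀ s : S, ¬ enc e s = m := by
        intro s hs
        exact h (Finset.mem_image.mpr ⟨s, Finset.mem_univ s, hs⟩)
      simp [h, this]
  have hle : ∀ s m, N s m ≤ D m := by
    intro s m
    apply Finset.card_le_card
    intro e he
    simp only [Finset.mem_filter, Finset.mem_univ, true_and] at he ⊢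
    exact Finset.mem_image.mpr ⟨s, Finset.mem_univ s, he⟩
  constructor
  · intro h m s s'
    by_cases hDm : D m = 0
    · show N s m = N s' m
      have h1 := hle s m
      have h2 := hle s' m
      omega
    · have hDpos : (0 : ℝ) < (D m : ℝ) * c := by
        have : 0 < D m := Nat.pos_of_ne_zero hDm
        have : (0:ℝ) < (D m : ℝ) := by exact_mod_cast this
        positivity
      have key : ∀ t : S, (N t m : ℝ) * c = (1 / (Fintype.card S : ℝ)) * ((D m : ℝ) * c) := by
        intro t
        have := h t m (by rw [hsum2]; exact hDpos)
        rw [hsum1, hsum2] at this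
        field_simp at this ⊢
        linarith [this]
      have := (key s).trans (key s').symm
      have hNc : (N s m : ℝ) = (N s' m : ℝ) := by
        have hcne : c ≠ 0 := ne_of_gt hcpos
        exact mul_right_cancel₀ hcne this
      exact_mod_cast hNc
  · intro h s m hpos
    rw [hsum2] at hpos
    rw [hsum1, hsum2]
    have hDpos : 0 < D m := by
      by_contra hne
      have : D m = 0 := by omega
      rw [this] at hpos
      simp at hpos
    have hDs : (D m : ℕ) = Fintype.card S * N s m := by
      rw [hD m]
      rw [Finset.sum_congr rfl (fun t _ => h m t s)]
      simp [Finset.sum_const, Finset.card_univ, mul_comm]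
      rfl
    have hNpos : 0 < N s m := by
      by_contra hne
      have : N s m = 0 := by omega
      rw [this, mul_zero] at hDs
      omega
    have hNr : (0:ℝ) < (N s m : ℝ) := by exact_mod_cast hNpos
    rw [show ((D m : ℝ)) = (Fintype.card S : ℝ) * (N s m : ℝ) by exact_mod_cast hDs]
    field_simp
end

section
/- Let D = (X,B) be a Steiner t-(v,k,1) design in which v divides the number of blocks b. Then each block of D can be linearly ordered (i.e., there is a bijection from {1,…,k} to each block) so that every point x ∈ X occurs in each position j ∈ {1,…,k} in exactly b/v of the ordered blocks. -/
open Finset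

private lemma aux_count {α : Type*} [DecidableEq α] (s : Finset α) (a : α) (ha : a ∈ s) (n : ℕ) :
    ((s.powersetCard (n+1)).filter (fun T => a ∈ T)).card
      = (s.card - 1).choose n := by
  rw [← Finset.card_erase_of_mem ha, ← Finset.card_powersetCard]
  apply Finset.card_bij (fun T _ => T.erase a)
  · intro T hT
    simp only [mem_filter, mem_powersetCard] at hT
    simp only [mem_powersetCard]
    exact ⟨Finset.erase_subset_erase _ hT.1.1, by simp [Finset.card_erase_of_mem hT.2, hT.1.2]⟩
  · intro T hT T' hT' h
    simp only [mem_filter] at hT hT'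
    rw [← Finset.insert_erase hT.2, ← Finset.insert_erase hT'.2, h]
  · intro U hU
    simp only [mem_powersetCard] at hU
    have haU : a ∉ U := fun h => (Finset.mem_erase.mp (hU.1 h)).1 rfl
    refine ⟨insert a U, ?_, ?_⟩
    · simp only [mem_filter, mem_powersetCard]
      exact ⟨⟨Finset.insert_subset ha (hU.1.trans (Finset.erase_subset _ _)),
        by rw [Finset.card_insert_of_notMem haU, hU.2]⟩, Finset.mem_insert_self _ _⟩
    · rw [Finset.erase_insert haU]

private lemma deg_eq {α : Type*} [DecidableEq α] (X : Finset α) (B : Finset (Finset α))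
    (v k t : ℕ) (ht : 1 ≤ t) (hX : X.card = v)
    (hblocks : ∀ b ∈ B, b ⊆ X ∧ b.card = k)
    (hdesign : ∀ T : Finset α, T ⊆ X → T.card = t →
      (B.filter (fun b => T ⊆ b)).card = 1)
    (x : α) (hx : x ∈ X) :
    (B.filter (fun blk => x ∈ blk)).card * (k-1).choose (t-1) = (v-1).choose (t-1) := by
  obtain ⟨t', rfl⟩ : ∃ t', t = t' + 1 := ⟨t - 1, (Nat.succ_pred_eq_of_pos ht).symm⟩
  simp only [Nat.add_sub_cancel]
  set N : Finset (Finset α) := (X.powersetCard (t'+1)).filter (fun T => x ∈ T) with hN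
  have key := Finset.sum_card_bipartiteAbove_eq_sum_card_bipartiteBelow
    (s := B) (t := N) (r := fun blk T => T ⊆ blk)
  have hRHS : ∑ T ∈ N, (Finset.bipartiteBelow (fun blk T => T ⊆ blk) B T).card = N.card := by
    have h1 : ∀ T ∈ N, (Finset.bipartiteBelow (fun blk T => T ⊆ blk) B T).card = 1 := by
      intro T hT
      simp only [hN, mem_filter, mem_powersetCard] at hT
      simpa [Finset.bipartiteBelow] using hdesign T hT.1.1 hT.1.2
    rw [Finset.sum_congr rfl h1, Finset.sum_const, smul_eq_mul, mul_one]
  have hLHS : ∀ blk ∈ B, (Finset.bipartiteAbove (fun blk T => T ⊆ blk) N blk).card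
      = if x ∈ blk then (k-1).choose t' else 0 := by
    intro blk hb
    by_cases hxb : x ∈ blk
    · rw [if_pos hxb, ← (hblocks blk hb).2]
      rw [← aux_count blk x hxb t']
      congr 1
      ext T
      simp only [Finset.bipartiteAbove, hN, mem_filter, mem_powersetCard]
      constructor
      · rintro ⟨⟨⟨_, hc⟩, hxT⟩, hTb⟩; exact ⟨⟨hTb, hc⟩, hxT⟩
      · rintro ⟨⟨hTb, hc⟩, hxT⟩; exact ⟨⟨⟨hTb.trans (hblocks blk hb).1, hc⟩, hxT⟩, hTb⟩
    · rw [if_neg hxb]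
      rw [Finset.card_eq_zero]
      ext T
      simp only [Finset.bipartiteAbove, hN, mem_filter, mem_powersetCard, Finset.notMem_empty,
        iff_false, not_and]
      rintro ⟨_, hxT⟩ hTb
      exact hxb (hTb hxT)
  have hNcard : N.card = (v-1).choose t' := by
    rw [hN, aux_count X x hx t', hX]
  rw [hRHS, Finset.sum_congr rfl hLHS, ← Finset.sum_filter, Finset.sum_const, smul_eq_mul] at key
  rw [← hNcard, ← key]

private lemma build {α : Type*} [DecidableEq α] {ι : Type*} [Fintype ι] [DecidableEq ι]
    (X : Finset α) (m : ℕ) (hcard : Fintype.card ι = X.card * m) :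
    ∀ (n : ℕ) (S : ι → Finset α),
      (∀ b, S b ⊆ X) → (∀ b, (S b).card = n) →
      (∀ x ∈ X, (Finset.univ.filter (fun b => x ∈ S b)).card = n * m) →
      ∃ f : ι → Fin n → α, (∀ b, Finset.image (f b) Finset.univ = S b) ∧
        ∀ x ∈ X, ∀ j : Fin n, (Finset.univ.filter (fun b => f b j = x)).card = m := by
  intro n
  induction n with
  | zero =>
    intro S _ hS0 _
    refine ⟨fun _ => Fin.elim0, fun b => ?_, fun x _ j => j.elim0⟩
    simp [Finset.card_eq_zero.mp (hS0 b)]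
  | succ n ih =>
    intro S hSX hScard hScount
    -- Hall's condition
    have hall : ∀ A : Finset ι,
        A.card ≤ (A.biUnion (fun b => (S b) ×ˢ (Finset.univ : Finset (Fin m)))).card := by
      intro A
      have h1 : A.biUnion (fun b => (S b) ×ˢ (Finset.univ : Finset (Fin m)))
          = (A.biUnion S) ×ˢ (Finset.univ : Finset (Fin m)) := by
        ext p
        simp only [Finset.mem_biUnion, Finset.mem_product, Finset.mem_univ, and_true]
      rw [h1, Finset.card_product, Finset.card_univ, Fintype.card_fin]
      set N := A.biUnion S with hNdef
      have h2 : ∀ b ∈ A, (S b).card = (N.filter (fun x => x ∈ S b)).card := by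
        intro b hb
        congr 1
        ext y
        simp only [Finset.mem_filter, hNdef, Finset.mem_biUnion]
        exact ⟨fun hy => ⟨⟨b, hb, hy⟩, hy⟩, fun hy => hy.2⟩
      have h3 : ∑ b ∈ A, (N.filter (fun x => x ∈ S b)).card
          = ∑ x ∈ N, (A.filter (fun b => x ∈ S b)).card :=
        Finset.sum_card_bipartiteAbove_eq_sum_card_bipartiteBelow
          (s := A) (t := N) (r := fun b x => x ∈ S b)
      have h4 : (n+1) * A.card ≤ N.card * ((n+1) * m) := by
        calc (n+1) * A.card = ∑ b ∈ A, (S b).card := by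
              rw [Finset.sum_congr rfl (fun b _ => hScard b), Finset.sum_const, smul_eq_mul,
                mul_comm]
          _ = ∑ x ∈ N, (A.filter (fun b => x ∈ S b)).card := by
              rw [Finset.sum_congr rfl h2]; exact h3
          _ ≤ ∑ x ∈ N, ((n+1) * m) := by
              refine Finset.sum_le_sum (fun x hxN => ?_)
              obtain ⟨b, _, hxb⟩ := Finset.mem_biUnion.mp hxN
              rw [← hScount x (hSX b hxb)]
              exact Finset.card_le_card (Finset.filter_subset_filter _ (Finset.subset_univ A))
          _ = N.card * ((n+1) * m) := by rw [Finset.sum_const, smul_eq_mul]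
      have := Nat.le_of_mul_le_mul_left (a := A.card) (b := N.card * m) (by
        calc (n+1) * A.card ≤ N.card * ((n+1) * m) := h4
          _ = (n+1) * (N.card * m) := by ring) (Nat.succ_pos n)
      exact this
    obtain ⟨c, hcinj, hcmem⟩ :=
      (Finset.all_card_le_biUnion_card_iff_exists_injective
        (fun b : ι => (S b) ×ˢ (Finset.univ : Finset (Fin m)))).mp hall
    have hmem1 : ∀ b, (c b).1 ∈ S b := fun b => (Finset.mem_product.mp (hcmem b)).1
    -- each point is hit at most m times
    have hle : ∀ x, (Finset.univ.filter (fun b => (c b).1 = x)).card ≤ m := by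
      intro x
      have : (Finset.univ.filter (fun b => (c b).1 = x)).card
          ≤ (Finset.univ : Finset (Fin m)).card := by
        refine Finset.card_le_card_of_injOn (fun b => (c b).2) (fun _ _ => Finset.mem_univ _) ?_
        intro b hb b' hb' h2
        simp only [Finset.coe_filter, Set.mem_setOf_eq] at hb hb'
        exact hcinj (Prod.ext (hb.2.trans hb'.2.symm) h2)
      simpa using this
    have hsum : ∑ x ∈ X, (Finset.univ.filter (fun b => (c b).1 = x)).card = Fintype.card ι := by
      rw [← Finset.card_univ]
      exact (Finset.card_eq_sum_card_fiberwise
        (fun b _ => hSX b (hmem1 b))).symm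
    -- hence exactly m times
    have heq : ∀ x ∈ X, (Finset.univ.filter (fun b => (c b).1 = x)).card = m := by
      refine (Finset.sum_eq_sum_iff_of_le (fun x _ => hle x)).mp ?_
      rw [hsum, Finset.sum_const, smul_eq_mul, hcard]
    -- induction hypothesis on the erased family
    have hmain := ih (fun b => (S b).erase (c b).1)
      (fun b => (Finset.erase_subset _ _).trans (hSX b))
      (fun b => by rw [Finset.card_erase_of_mem (hmem1 b), hScard b, Nat.add_sub_cancel])
      (by
        intro x hx
        have hsub : Finset.univ.filter (fun b => (c b).1 = x)
            ⊆ Finset.univ.filter (fun b : ι => x ∈ S b) := by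
          intro b hb
          simp only [Finset.mem_filter] at hb ⊢
          exact ⟨hb.1, hb.2 ▸ hmem1 b⟩
        have hdiff : Finset.univ.filter (fun b => x ∈ (S b).erase (c b).1)
            = (Finset.univ.filter (fun b : ι => x ∈ S b))
              \ (Finset.univ.filter (fun b => (c b).1 = x)) := by
          ext b
          simp only [Finset.mem_filter, Finset.mem_sdiff, Finset.mem_erase, Finset.mem_univ,
            true_and]
          constructor
          · rintro ⟨hne, hmem⟩; exact ⟨hmem, fun h => hne h.symm⟩
          · rintro ⟨hmem, hne⟩; exact ⟨fun h => hne h.symm, hmem⟩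
        rw [hdiff, Finset.card_sdiff_of_subset hsub, hScount x hx, heq x hx, Nat.succ_mul,
          Nat.add_sub_cancel])
    obtain ⟨f', himg', hcount'⟩ := hmain
    refine ⟨fun b => Fin.cons ((c b).1) (f' b), ?_, ?_⟩
    · intro b
      ext y
      simp only [Finset.mem_image, Finset.mem_univ, true_and]
      constructor
      · rintro ⟨j, rfl⟩
        refine Fin.cases ?_ ?_ j
        · simpa using hmem1 b
        · intro i
          have : f' b i ∈ Finset.image (f' b) Finset.univ :=
            Finset.mem_image_of_mem _ (Finset.mem_univ i)
          rw [himg' b] at this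
          simpa using (Finset.erase_subset _ _) this
      · intro hy
        by_cases hyc : y = (c b).1
        · exact ⟨0, by simp [hyc]⟩
        · have hyS : y ∈ (S b).erase (c b).1 := Finset.mem_erase.mpr ⟨hyc, hy⟩
          have himg'' : Finset.image (f' b) Finset.univ = (S b).erase (c b).1 := himg' b
          rw [← himg''] at hyS
          obtain ⟨i, _, hi⟩ := Finset.mem_image.mp hyS
          exact ⟨i.succ, by simpa using hi⟩
    · intro x hx j
      refine Fin.cases ?_ ?_ j
      · simpa using heq x hx
      · intro i
        simpa using hcount' x hx i

/-- In a Steiner t-(v,k,1) design in which v divides the number of blocks b, the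
blocks can be linearly ordered so that every point occurs in each of the k
positions in exactly b/v of the ordered blocks. -/
theorem stmt12 {α : Type*} [DecidableEq α] (X : Finset α) (B : Finset (Finset α))
    (v k t : ℕ) (ht : 1 ≤ t) (htk : t ≤ k) (hkv : k ≤ v)
    (hX : X.card = v)
    (hblocks : ∀ b ∈ B, b ⊆ X ∧ b.card = k)
    (hdesign : ∀ T : Finset α, T ⊆ X → T.card = t →
      (B.filter (fun b => T ⊆ b)).card = 1)
    (hdvd : v ∣ B.card) :
    ∃ f : {b // b ∈ B} → Fin k → α,
      (∀ b, Finset.image (f b) Finset.univ = b.1) ∧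
      ∀ x ∈ X, ∀ j : Fin k,
        (Finset.univ.filter (fun b : {b // b ∈ B} => f b j = x)).card
          = B.card / v := by
  set m := B.card / v with hm
  have hbcard : B.card = v * m := (Nat.mul_div_cancel' hdvd).symm
  have hv : 0 < v := lt_of_lt_of_le ht (htk.trans hkv)
  have hC : 0 < (k-1).choose (t-1) := Nat.choose_pos (Nat.sub_le_sub_right htk 1)
  have hconst : ∀ x ∈ X, ∀ y ∈ X,
      (B.filter (fun blk => x ∈ blk)).card = (B.filter (fun blk => y ∈ blk)).card := by
    intro x hx y hy
    exact Nat.eq_of_mul_eq_mul_right hC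
      ((deg_eq X B v k t ht hX hblocks hdesign x hx).trans
        (deg_eq X B v k t ht hX hblocks hdesign y hy).symm)
  have hsumdeg : ∑ x ∈ X, (B.filter (fun blk => x ∈ blk)).card = B.card * k := by
    have key := Finset.sum_card_bipartiteAbove_eq_sum_card_bipartiteBelow
      (s := X) (t := B) (r := fun x blk => x ∈ blk)
    simp only [Finset.bipartiteAbove, Finset.bipartiteBelow] at key
    rw [key]
    have h1 : ∀ blk ∈ B, (X.filter (fun x => x ∈ blk)).card = k := by
      intro blk hb
      have : X.filter (fun x => x ∈ blk) = blk := by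
        ext y
        simp only [Finset.mem_filter]
        exact ⟨fun h => h.2, fun h => ⟨(hblocks blk hb).1 h, h⟩⟩
      rw [this, (hblocks blk hb).2]
    rw [Finset.sum_congr rfl h1, Finset.sum_const, smul_eq_mul]
  have hdegval : ∀ x ∈ X, (B.filter (fun blk => x ∈ blk)).card = k * m := by
    intro x hx
    have h1 : ∑ y ∈ X, (B.filter (fun blk => y ∈ blk)).card
        = X.card * (B.filter (fun blk => x ∈ blk)).card := by
      rw [Finset.sum_congr rfl (fun y hy => hconst y hy x hx), Finset.sum_const, smul_eq_mul]
    rw [h1, hX] at hsumdeg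
    rw [hbcard] at hsumdeg
    apply Nat.eq_of_mul_eq_mul_left hv
    rw [hsumdeg]; ring
  have hcard : Fintype.card {b // b ∈ B} = X.card * m := by
    rw [Fintype.card_coe, hX, hbcard]
  have hcount : ∀ x ∈ X,
      (Finset.univ.filter (fun b : {b // b ∈ B} => x ∈ b.1)).card = k * m := by
    intro x hx
    rw [← hdegval x hx]
    apply Finset.card_bij (fun b _ => b.1)
    · intro b hb
      simp only [Finset.mem_filter] at hb ⊢
      exact ⟨b.2, hb.2⟩
    · intro b _ b' _ h
      exact Subtype.ext h
    · intro blk hblk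
      simp only [Finset.mem_filter] at hblk
      exact ⟨⟨blk, hblk.1⟩, Finset.mem_filter.mpr ⟨Finset.mem_univ _, hblk.2⟩, rfl⟩
  obtain ⟨f, hf1, hf2⟩ := build X m hcard k (fun b : {b // b ∈ B} => b.1)
    (fun b => (hblocks b.1 b.2).1) (fun b => (hblocks b.1 b.2).2) hcount
  exact ⟨f, hf1, hf2⟩
end

section
/- Suppose there is a Steiner t-(v,k,1) design with v dividing b = C(v,t)/C(k,t). Then there is an optimal authentication code for k equiprobable source states, with v messages and C(v,t)/C(k,t) encoding rules (used equiprobably), that is (t−1)-fold secure against spoofing and provides perfect secrecy. -/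
open Finset

lemma aux_hall_select {ι M : Type*} [Fintype ι] [DecidableEq ι] [Fintype M] [DecidableEq M]
    (c j : ℕ) (hj : 1 ≤ j) (g : ι → Finset M)
    (hcard : ∀ i, (g i).card = j)
    (hreg : ∀ m : M, (univ.filter (fun i => m ∈ g i)).card = c * j) :
    ∃ f : ι → M, (∀ i, f i ∈ g i) ∧
      ∀ m : M, (univ.filter (fun i => f i = m)).card = c := by
  classical
  -- Hall condition for the bipartite graph ι vs M × Fin c
  have hall : ∀ A : Finset ι, A.card ≤ (A.biUnion (fun i => (g i) ×ˢ (univ : Finset (Fin c)))).card := by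
    intro A
    have hbU : A.biUnion (fun i => (g i) ×ˢ (univ : Finset (Fin c)))
        = (A.biUnion g) ×ˢ (univ : Finset (Fin c)) := by
      ext ⟨m, p⟩; simp [mem_biUnion, mem_product]
    rw [hbU, card_product, card_univ, Fintype.card_fin]
    -- j * A.card ≤ j * ((A.biUnion g).card * c)
    have key : j * A.card ≤ (A.biUnion g).card * (c * j) := by
      have h1 : ∑ i ∈ A, (g i).card = ∑ i ∈ A, ∑ m ∈ A.biUnion g, (if m ∈ g i then 1 else 0) := by
        refine sum_congr rfl fun i hi => ?_
        rw [← card_filter]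
        congr 1
        ext m; simp only [mem_filter, mem_biUnion]
        exact ⟨fun h => ⟨⟨i, hi, h⟩, h⟩, fun h => h.2⟩
      have h2 : ∑ i ∈ A, ∑ m ∈ A.biUnion g, (if m ∈ g i then 1 else 0)
          = ∑ m ∈ A.biUnion g, (A.filter (fun i => m ∈ g i)).card := by
        rw [sum_comm]
        exact sum_congr rfl fun m _ => (card_filter _ _).symm
      have h3 : ∑ m ∈ A.biUnion g, (A.filter (fun i => m ∈ g i)).card
          ≤ ∑ m ∈ A.biUnion g, (c * j) := by
        refine sum_le_sum fun m _ => ?_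
        rw [← hreg m]
        exact card_le_card (filter_subset_filter _ (subset_univ A))
      calc j * A.card = ∑ i ∈ A, (g i).card := by
            rw [sum_congr rfl (fun i _ => hcard i), sum_const, smul_eq_mul, mul_comm]
        _ ≤ (A.biUnion g).card * (c * j) := by
            rw [h1, h2]; simpa using h3
    have : j * A.card ≤ j * ((A.biUnion g).card * c) := by
      calc j * A.card ≤ (A.biUnion g).card * (c * j) := key
        _ = j * ((A.biUnion g).card * c) := by ring
    exact Nat.le_of_mul_le_mul_left this hj
  obtain ⟨F, hFinj, hFmem⟩ := (Finset.all_card_le_biUnion_card_iff_exists_injective _).mp hall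
  refine ⟨fun i => (F i).1, fun i => (mem_product.mp (hFmem i)).1, ?_⟩
  -- each fiber has card ≤ c
  have hle : ∀ m : M, (univ.filter (fun i => (F i).1 = m)).card ≤ c := by
    intro m
    have : ((univ.filter (fun i => (F i).1 = m)).image (fun i => (F i).2)).card
        = (univ.filter (fun i => (F i).1 = m)).card := by
      apply card_image_of_injOn
      intro a ha b hb hab
      simp only [mem_coe, mem_filter] at ha hb
      exact hFinj (Prod.ext (ha.2.trans hb.2.symm) hab)
    calc (univ.filter (fun i => (F i).1 = m)).card
        = ((univ.filter (fun i => (F i).1 = m)).image (fun i => (F i).2)).card := this.symm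
      _ ≤ (univ : Finset (Fin c)).card := card_le_card (subset_univ _)
      _ = c := by simp
  -- total count
  have htot : ∑ m : M, (univ.filter (fun i => (F i).1 = m)).card = Fintype.card ι := by
    rw [← card_univ]
    exact (card_eq_sum_card_fiberwise (fun i _ => mem_univ _)).symm
  have hcardι : Fintype.card ι = Fintype.card M * c := by
    have h1 : ∑ i : ι, (g i).card = ∑ m : M, (univ.filter (fun i => m ∈ g i)).card := by
      have : ∀ i : ι, (g i).card = ∑ m : M, (if m ∈ g i then 1 else 0) := by
        intro i; rw [← card_filter]; congr 1; ext m; simp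
      rw [sum_congr rfl fun i _ => this i, sum_comm]
      exact sum_congr rfl fun m _ => (card_filter _ _).symm
    have h2 : Fintype.card ι * j = Fintype.card M * (c * j) := by
      calc Fintype.card ι * j = ∑ i : ι, (g i).card := by
            rw [sum_congr rfl (fun i _ => hcard i), sum_const, smul_eq_mul, card_univ]
        _ = ∑ m : M, (univ.filter (fun i => m ∈ g i)).card := h1
        _ = Fintype.card M * (c * j) := by
            rw [sum_congr rfl (fun m _ => hreg m), sum_const, smul_eq_mul, card_univ]
    have := h2
    rw [← mul_assoc] at this
    exact Nat.eq_of_mul_eq_mul_right hj this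
  have hsum : ∑ m : M, (univ.filter (fun i => (F i).1 = m)).card = ∑ m : M, c := by
    rw [htot, hcardι, sum_const, smul_eq_mul, card_univ]
  exact fun m => (Finset.sum_eq_sum_iff_of_le (fun m _ => hle m)).mp hsum m (mem_univ m)

lemma aux_balanced {ι M : Type*} [Fintype ι] [DecidableEq ι] [Fintype M] [DecidableEq M]
    (j : ℕ) : ∀ (c : ℕ) (g : ι → Finset M), (∀ i, (g i).card = j) →
    (∀ m : M, (univ.filter (fun i => m ∈ g i)).card = c * j) →
    ∃ e : ι → (Fin j ↪ M), (∀ i, Finset.image (e i) univ = g i) ∧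
      ∀ (m : M) (p : Fin j), (univ.filter (fun i => e i p = m)).card = c := by
  induction j with
  | zero =>
    intro c g hcard _
    refine ⟨fun _ => Function.Embedding.ofIsEmpty, fun i => ?_, fun m p => p.elim0⟩
    have : g i = ∅ := card_eq_zero.mp (hcard i)
    simp [this]
  | succ j ih =>
    intro c g hcard hreg
    obtain ⟨f, hf, hfc⟩ := aux_hall_select c (j + 1) (Nat.succ_le_succ (Nat.zero_le _)) g hcard hreg
    set g' : ι → Finset M := fun i => (g i).erase (f i) with hg'
    have hcard' : ∀ i, (g' i).card = j := by
      intro i; rw [hg']; simp only [card_erase_of_mem (hf i), hcard i]; omega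
    have hreg' : ∀ m : M, (univ.filter (fun i => m ∈ g' i)).card = c * j := by
      intro m
      have hsub : (univ.filter (fun i => f i = m)) ⊆ (univ.filter (fun i => m ∈ g i)) := by
        intro i hi
        simp only [mem_filter, mem_univ, true_and] at hi ⊢
        rw [← hi]; exact hf i
      have hsplit : (univ.filter (fun i => m ∈ g' i))
          = (univ.filter (fun i => m ∈ g i)) \ (univ.filter (fun i => f i = m)) := by
        ext i
        simp only [hg', mem_filter, mem_univ, true_and, mem_sdiff, mem_erase]
        constructor
        · exact fun h => ⟨h.2, fun he => h.1 he.symm⟩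
        · exact fun h => ⟨fun he => h.2 he.symm, h.1⟩
      rw [hsplit, card_sdiff_of_subset hsub, hreg m, hfc m, Nat.mul_succ]
      omega
    obtain ⟨e', he'img, he'c⟩ := ih c g' hcard' hreg'
    have hnot : ∀ i, f i ∉ Set.range (e' i) := by
      rintro i ⟨p, hp⟩
      have : e' i p ∈ g' i := by
        rw [← he'img i]; exact mem_image_of_mem _ (mem_univ p)
      rw [hg'] at this
      exact (Finset.ne_of_mem_erase this) hp
    refine ⟨fun i => ⟨Fin.cons (f i) (e' i),
        Fin.cons_injective_iff.mpr ⟨hnot i, (e' i).injective⟩⟩, ?_, ?_⟩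
    · intro i
      have : Finset.image (Fin.cons (f i) ⇑(e' i) : Fin (j+1) → M) univ
          = insert (f i) (Finset.image (e' i) univ) := by
        rw [Fin.univ_succ, cons_eq_insert, image_insert, Fin.cons_zero, map_eq_image,
          image_image]
        simp [Function.comp_def, Fin.cons_succ]
      simp only [Function.Embedding.coeFn_mk, this, he'img i, hg']
      exact insert_erase (hf i)
    · intro m p
      refine Fin.cases ?_ ?_ p
      · simpa using hfc m
      · intro q
        simpa using he'c m q

lemma aux_card_between {M : Type*} [DecidableEq M] (O b : Finset M) (hOb : O ⊆ b)
    {t : ℕ} (htO : O.card ≤ t) :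
    ((b.powersetCard t).filter (fun T => O ⊆ T)).card = (b.card - O.card).choose (t - O.card) := by
  have hpc := card_powersetCard (t - O.card) (b \ O)
  rw [card_sdiff_of_subset hOb] at hpc
  rw [← hpc]
  apply card_bij' (fun T _ => T \ O) (fun U _ => U ∪ O)
  · intro T hT
    simp only [mem_filter, mem_powersetCard] at hT
    obtain ⟨⟨hTb, hTt⟩, hOT⟩ := hT
    rw [mem_powersetCard]
    exact ⟨sdiff_subset_sdiff hTb le_rfl, by rw [card_sdiff_of_subset hOT, hTt]⟩
  · intro U hU
    rw [mem_powersetCard] at hU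
    obtain ⟨hUb, hUt⟩ := hU
    have hdisj : Disjoint U O := Finset.disjoint_of_subset_left hUb (Finset.sdiff_disjoint)
    simp only [mem_filter, mem_powersetCard]
    refine ⟨⟨union_subset (hUb.trans sdiff_subset) hOb, ?_⟩, subset_union_right⟩
    rw [card_union_of_disjoint hdisj, hUt]
    omega
  · intro T hT
    simp only [mem_filter] at hT
    exact sdiff_union_of_subset hT.2
  · intro U hU
    rw [mem_powersetCard] at hU
    have hdisj : Disjoint U O := Finset.disjoint_of_subset_left hU.1 (Finset.sdiff_disjoint)
    rw [union_sdiff_right, sdiff_eq_self_of_disjoint hdisj]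

lemma aux_design_count {M : Type*} [Fintype M] [DecidableEq M] {k v t : ℕ}
    (hv : Fintype.card M = v)
    (B : Finset (Finset M)) (hblocks : ∀ b ∈ B, b.card = k)
    (hdesign : ∀ T : Finset M, T.card = t → (B.filter (fun b => T ⊆ b)).card = 1)
    (O : Finset M) {j : ℕ} (hO : O.card = j) (hjt : j ≤ t) :
    (B.filter (fun b => O ⊆ b)).card * (k - j).choose (t - j) = (v - j).choose (t - j) := by
  classical
  set A := ((univ : Finset M).powersetCard t).filter (fun T => O ⊆ T) with hA
  have hAcard : A.card = (v - j).choose (t - j) := by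
    rw [hA, aux_card_between O univ (subset_univ O) (hO ▸ hjt), card_univ, hv, hO]
  have h1 : ∑ T ∈ A, (B.filter (fun b => T ⊆ b)).card = A.card := by
    rw [sum_congr rfl (fun T hT => hdesign T ?_), sum_const, smul_eq_mul, mul_one]
    rw [hA, mem_filter, mem_powersetCard] at hT
    exact hT.1.2
  have h2 : ∑ T ∈ A, (B.filter (fun b => T ⊆ b)).card
      = ∑ b ∈ B, ((b.powersetCard t).filter (fun T => O ⊆ T)).card := by
    have e1 : ∀ T ∈ A, (B.filter (fun b => T ⊆ b)).card = ∑ b ∈ B, (if T ⊆ b then 1 else 0) :=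
      fun T _ => card_filter _ _
    rw [sum_congr rfl e1, sum_comm]
    refine sum_congr rfl fun b _ => ?_
    rw [← card_filter]
    congr 1
    ext T
    simp only [hA, mem_filter, mem_powersetCard, subset_univ, true_and]
    tauto
  have h3 : ∑ b ∈ B, ((b.powersetCard t).filter (fun T => O ⊆ T)).card
      = (B.filter (fun b => O ⊆ b)).card * (k - j).choose (t - j) := by
    have e2 : ∀ b ∈ B, ((b.powersetCard t).filter (fun T => O ⊆ T)).card
        = if O ⊆ b then (k - j).choose (t - j) else 0 := by
      intro b hb
      by_cases hOb : O ⊆ b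
      · rw [if_pos hOb, aux_card_between O b hOb (hO ▸ hjt), hblocks b hb, hO]
      · rw [if_neg hOb, card_eq_zero, filter_eq_empty_iff]
        intro T hT
        rw [mem_powersetCard] at hT
        exact fun hOT => hOb (hOT.trans hT.1)
    rw [sum_congr rfl e2, ← sum_filter, sum_const, smul_eq_mul]
  rw [← h3, ← h2, h1, hAcard]

lemma aux_attach_filter_card {α : Type*} (s : Finset α) (p : α → Prop) [DecidablePred p] :
    (s.attach.filter (fun i : {x // x ∈ s} => p ↑i)).card = (s.filter p).card := by
  apply card_bij (fun (i : {x // x ∈ s}) _ => (i : α))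
  · intro a ha; rw [mem_filter] at ha ⊢; exact ⟨a.2, ha.2⟩
  · intro a _ b _ h; exact Subtype.ext h
  · intro b hb; rw [mem_filter] at hb
    exact ⟨⟨b, hb.1⟩, by simp [hb.2], rfl⟩

/-- Main theorem: from a Steiner t-(v,k,1) design whose number of points v divides
its number of blocks b = C(v,t)/C(k,t), one obtains an optimal authentication code
for k equiprobable source states with v messages and C(v,t)/C(k,t) equiprobable
encoding rules that is (t−1)-fold secure against spoofing (P_{d_i} = (k−i)/(v−i)
for 0 ≤ i ≤ t−1) and provides perfect secrecy (each message occurs equally often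
in every column of the encoding matrix). -/
theorem stmt14 {S M : Type*} [Fintype S] [Fintype M] [DecidableEq M] [DecidableEq S]
    (k v t : ℕ) (hk : Fintype.card S = k) (hv : Fintype.card M = v)
    (ht : 1 ≤ t) (htk : t ≤ k) (hkv : k ≤ v)
    (B : Finset (Finset M)) (hblocks : ∀ b ∈ B, b.card = k)
    (hdesign : ∀ T : Finset M, T.card = t → (B.filter (fun b => T ⊆ b)).card = 1)
    (hdvd : v ∣ B.card) :
    ∃ E : Finset (S ↪ M),
      E.card = v.choose t / k.choose t ∧
      (∀ i < t, ∀ O : Finset M, O.card = i → ∀ m' ∉ O,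
        (E.filter (fun e : S ↪ M =>
            insert m' O ⊆ Finset.image e Finset.univ)).card * (v - i)
          = (k - i) * (E.filter (fun e : S ↪ M =>
              O ⊆ Finset.image e Finset.univ)).card) ∧
      (∀ (m : M) (s s' : S),
        (E.filter (fun e : S ↪ M => e s = m)).card
          = (E.filter (fun e : S ↪ M => e s' = m)).card) := by
  classical
  obtain ⟨c, hc⟩ := hdvd
  have hkpos : 0 < k := le_trans ht htk
  have hvpos : 0 < v := lt_of_lt_of_le hkpos hkv
  -- number of blocks
  have hBcard : B.card * k.choose t = v.choose t := by
    have h := aux_design_count hv B hblocks hdesign ∅ card_empty (Nat.zero_le t)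
    have hfB : B.filter (fun b => ∅ ⊆ b) = B := filter_true_of_mem (fun b _ => empty_subset b)
    simp only [hfB, Nat.sub_zero] at h
    exact h
  -- replication number is c * k
  have hlam : ∀ m : M, (B.filter (fun b => m ∈ b)).card * (k - 1).choose (t - 1)
      = (v - 1).choose (t - 1) := by
    intro m
    have h := aux_design_count hv B hblocks hdesign {m} (card_singleton m) ht
    simp only [singleton_subset_iff, card_singleton] at h
    exact h
  have hsum : ∑ m : M, (B.filter (fun b => m ∈ b)).card = B.card * k := by
    have e1 : ∀ m : M, (B.filter (fun b => m ∈ b)).card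
        = ∑ b ∈ B, (if m ∈ b then 1 else 0) := fun m => card_filter _ _
    rw [sum_congr rfl (fun m _ => e1 m), sum_comm]
    have e2 : ∀ b ∈ B, (∑ m : M, if m ∈ b then 1 else 0) = k := by
      intro b hb
      rw [← card_filter]
      have hfb : ((univ : Finset M).filter (fun m => m ∈ b)) = b := by ext m; simp
      rw [hfb, hblocks b hb]
    rw [sum_congr rfl e2, sum_const, smul_eq_mul]
  have hrep : ∀ m : M, (B.filter (fun b => m ∈ b)).card = c * k := by
    intro m
    have hCpos : 0 < (k - 1).choose (t - 1) := Nat.choose_pos (by omega)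
    have heq : ∀ m' : M, (B.filter (fun b => m' ∈ b)).card
        = (B.filter (fun b => m ∈ b)).card := fun m' =>
      Nat.eq_of_mul_eq_mul_right hCpos (by rw [hlam m', hlam m])
    have hkey : v * (B.filter (fun b => m ∈ b)).card = v * (c * k) := by
      calc v * (B.filter (fun b => m ∈ b)).card
          = ∑ m' : M, (B.filter (fun b => m' ∈ b)).card := by
            rw [sum_congr rfl (fun m' _ => heq m'), sum_const, smul_eq_mul, card_univ, hv]
        _ = B.card * k := hsum
        _ = v * (c * k) := by rw [hc]; ring
    exact Nat.eq_of_mul_eq_mul_left hvpos hkey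
  -- balanced embeddings indexed by blocks
  have hcard' : ∀ i : {x // x ∈ B}, ((i : Finset M)).card = k := fun i => hblocks i i.2
  have hreg' : ∀ m : M, ((univ : Finset {x // x ∈ B}).filter
      (fun i : {x // x ∈ B} => m ∈ (i : Finset M))).card = c * k := by
    intro m
    rw [univ_eq_attach, aux_attach_filter_card B (fun b => m ∈ b)]
    exact hrep m
  obtain ⟨e, heimg, hec⟩ := aux_balanced k c _ hcard' hreg'
  set eS : S ≃ Fin k := Fintype.equivFinOfCardEq hk with heS
  set emb : {x // x ∈ B} → (S ↪ M) := fun i => (eS.toEmbedding).trans (e i) with hemb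
  have hembimg : ∀ i, Finset.image (emb i) univ = (i : Finset M) := by
    intro i
    have h1 : Finset.image (⇑(emb i)) univ
        = Finset.image (⇑(e i)) (Finset.image (⇑eS) univ) := by
      rw [image_image]; rfl
    have h2 : Finset.image (⇑eS) univ = univ := Finset.image_univ_equiv eS
    rw [h1, h2, heimg i]
  have hinj : Set.InjOn emb (univ : Finset {x // x ∈ B}) := by
    intro a _ b _ hab
    exact Subtype.ext (by rw [← hembimg a, ← hembimg b, hab])
  have htrans : ∀ (p : (S ↪ M) → Prop) [DecidablePred p],
      (((univ : Finset {x // x ∈ B}).image emb).filter p).card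
        = ((univ : Finset {x // x ∈ B}).filter (fun i => p (emb i))).card := by
    intro p _
    rw [filter_image]
    exact card_image_of_injOn (hinj.mono (by intro x hx; simpa using (mem_filter.mp hx).1))
  have hcnt : ∀ T : Finset M,
      ((((univ : Finset {x // x ∈ B}).image emb)).filter
        (fun e : S ↪ M => T ⊆ Finset.image e univ)).card
      = (B.filter (fun b => T ⊆ b)).card := by
    intro T
    rw [htrans]
    have : ((univ : Finset {x // x ∈ B}).filter (fun i => T ⊆ Finset.image (emb i) univ))
        = ((univ : Finset {x // x ∈ B}).filter (fun i : {x // x ∈ B} => T ⊆ (i : Finset M))) := by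
      apply filter_congr
      intro i _
      rw [hembimg i]
    rw [this, univ_eq_attach, aux_attach_filter_card B (fun b => T ⊆ b)]
  refine ⟨(univ : Finset {x // x ∈ B}).image emb, ?_, ?_, ?_⟩
  · -- cardinality
    have hEcard : ((univ : Finset {x // x ∈ B}).image emb).card = B.card := by
      rw [card_image_of_injOn hinj, card_univ, Fintype.card_coe]
    rw [hEcard]
    exact (Nat.div_eq_of_eq_mul_left (Nat.choose_pos htk) hBcard.symm).symm
  · -- spoofing security
    intro i hi O hO m' hm'
    rw [hcnt (insert m' O), hcnt O]
    have h0 := aux_design_count hv B hblocks hdesign O hO (le_of_lt hi)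
    have h1 := aux_design_count hv B hblocks hdesign (insert m' O)
      (by rw [card_insert_of_notMem hm', hO]) (by omega)
    have ek : k - (i + 1) = k - i - 1 := by omega
    have et : t - (i + 1) = t - i - 1 := by omega
    have ev : v - (i + 1) = v - i - 1 := by omega
    rw [ek, et, ev] at h1
    set N0 := (B.filter (fun b => O ⊆ b)).card
    set N1 := (B.filter (fun b => insert m' O ⊆ b)).card
    set x := (k - i).choose (t - i) with hxdef
    set y := (k - i - 1).choose (t - i - 1) with hydef
    have hiv : i < v := by omega
    have hik : i < k := by omega
    have hx : 0 < x := Nat.choose_pos (by omega)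
    have hy : 0 < y := Nat.choose_pos (by omega)
    have key_v : (v - i) * (v - i - 1).choose (t - i - 1) = (v - i).choose (t - i) * (t - i) := by
      have h := Nat.add_one_mul_choose_eq (v - i - 1) (t - i - 1)
      have e1 : (v - i - 1) + 1 = v - i := by omega
      have e2 : (t - i - 1) + 1 = t - i := by omega
      simpa only [Nat.succ_eq_add_one, e1, e2] using h
    have key_k : (k - i) * y = x * (t - i) := by
      have h := Nat.add_one_mul_choose_eq (k - i - 1) (t - i - 1)
      have e1 : (k - i - 1) + 1 = k - i := by omega
      have e2 : (t - i - 1) + 1 = t - i := by omega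
      simpa only [Nat.succ_eq_add_one, e1, e2, hxdef, hydef] using h
    apply Nat.eq_of_mul_eq_mul_right (Nat.mul_pos hx hy)
    calc N1 * (v - i) * (x * y)
        = (N1 * y) * ((v - i) * x) := by ring
      _ = (v - i - 1).choose (t - i - 1) * ((v - i) * x) := by rw [h1]
      _ = ((v - i) * (v - i - 1).choose (t - i - 1)) * x := by ring
      _ = ((v - i).choose (t - i) * (t - i)) * x := by rw [key_v]
      _ = (N0 * x) * ((k - i) * y) := by rw [← h0, key_k]; ring
      _ = (k - i) * N0 * (x * y) := by ring
  · -- perfect secrecy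
    intro m s s'
    have hcol : ∀ s : S, (((univ : Finset {x // x ∈ B}).image emb).filter
        (fun e : S ↪ M => e s = m)).card = c := by
      intro s
      rw [htrans]
      exact hec m (eS s)
    rw [hcol s, hcol s']
end
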